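/- Let n ≥ r ≥ 2 and let G be an r-partite simple graph on n vertices. Then the sum of the absolute values of the eigenvalues of the adjacency matrix of G is at most (n^(3/2)/2)·sqrt(1 - 1/r) + (1 - 1/r)·n. -/

import Mathlib

set_option maxHeartbeats 1000000


open Matrix BigOperators Kronecker

/-- The singular values of a square matrix `A` over an `RCLike` field: the square roots of the
eigenvalues of the Hermitian matrix `A * Aᴴ`. -/
noncomputable def singularValues {𝕜 : Type*} [RCLike 𝕜] {m : Type*} [Fintype m] [DecidableEq m]
    (A : Matrix m m 𝕜) : m → ℝ :=
  fun i => Real.sqrt ((Matrix.isHermitian_mul_conjTranspose_self A).eigenvalues i)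

/-- The trace norm (nuclear norm) of a square matrix: the sum of its singular values. -/
noncomputable def traceNorm {𝕜 : Type*} [RCLike 𝕜] {m : Type*} [Fintype m] [DecidableEq m]
    (A : Matrix m m 𝕜) : ℝ :=
  ∑ i, singularValues A i

namespace ERPL

open Finset

variable {n r : ℕ}

/-- The "different color class" matrix. -/
def pmB (C : Fin n → Fin r) : Matrix (Fin n) (Fin n) ℝ :=
  Matrix.of fun i j => if C i = C j then (0:ℝ) else 1

variable (C : Fin n → Fin r)

/-- Size of color class `c`, as a real number. -/
def cnt (c : Fin r) : ℝ := ((Finset.univ.filter fun i => C i = c).card : ℝ)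

/-- Sum of `x` over color class `c`. -/
def cs (x : Fin n → ℝ) (c : Fin r) : ℝ := ∑ i ∈ Finset.univ.filter (fun i => C i = c), x i

lemma cnt_nonneg (c : Fin r) : 0 ≤ cnt C c := Nat.cast_nonneg _

lemma sum_cnt : ∑ c, cnt C c = (n : ℝ) := by
  unfold cnt
  rw [← Nat.cast_sum]
  have h := Finset.card_eq_sum_card_fiberwise (f := C) (s := Finset.univ)
    (t := Finset.univ) (fun x _ => Finset.mem_univ _)
  simp only [Finset.card_univ, Fintype.card_fin] at h
  exact_mod_cast h.symm

lemma sum_cs (x : Fin n → ℝ) : ∑ c, cs C x c = ∑ i, x i :=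
  Finset.sum_fiberwise _ _ _

lemma key_qf (hr : 2 ≤ r) (hn : r ≤ n) (x : Fin n → ℝ) :
    (∑ i, x i)^2 ≤ ∑ c, (cs C x c)^2 + (1 - 1/(r:ℝ)) * n * ∑ i, (x i)^2 := by
  classical
  have hr0 : (0:ℝ) < r := by exact_mod_cast Nat.lt_of_lt_of_le (by norm_num) hr
  have hn0 : (0:ℝ) < n := by exact_mod_cast Nat.lt_of_lt_of_le (by norm_num) (hr.trans hn)
  set K : ℝ := 1 - 1/(r:ℝ) with hKdef
  have hr2 : (2:ℝ) ≤ r := by exact_mod_cast hr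
  have hK : 0 < K := by
    have h1 : (1:ℝ)/r ≤ 1/2 := by
      rw [div_le_div_iff₀ hr0 (by norm_num)]; linarith
    have : (0:ℝ) < 1 - 1/2 := by norm_num
    simp only [hKdef]; linarith
  have hKn : 0 < K * n := mul_pos hK hn0
  set t : Fin r → ℝ := fun c => ∑ i ∈ Finset.univ.filter (fun i => C i = c), (x i)^2 with htdef
  have hst : ∀ c, (cs C x c)^2 ≤ cnt C c * t c := by
    intro c
    have := sq_sum_le_card_mul_sum_sq (s := Finset.univ.filter fun i => C i = c) (f := x)
    exact_mod_cast this
  have ht0 : ∀ c, 0 ≤ t c := fun c => Finset.sum_nonneg fun i _ => sq_nonneg _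
  have hsumt : ∑ c, t c = ∑ i, (x i)^2 := Finset.sum_fiberwise _ _ _
  set F : Finset (Fin r) := Finset.univ.filter (fun c => cnt C c ≠ 0) with hFdef
  have hcpos : ∀ c ∈ F, 0 < cnt C c := by
    intro c hc
    have := (Finset.mem_filter.1 hc).2
    exact lt_of_le_of_ne (cnt_nonneg C c) (Ne.symm this)
  have hdpos : ∀ c ∈ F, 0 < cnt C c + K * n := fun c hc => by
    have := hcpos c hc; linarith
  set m : ℝ := (F.card : ℝ) with hmdef
  have hm0 : 0 ≤ m := Nat.cast_nonneg _
  have hm_le : m ≤ (r:ℝ) := by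
    have h1 : F.card ≤ r := by simpa using Finset.card_le_univ F
    rw [hmdef]; exact_mod_cast h1
  set H : ℝ := ∑ c ∈ F, 1/(cnt C c + K*n) with hHdef
  have hH0 : 0 ≤ H := Finset.sum_nonneg fun c hc =>
    le_of_lt (div_pos one_pos (hdpos c hc))
  -- Cauchy-Schwarz no. 1
  have CS1 : m^2 ≤ (∑ c ∈ F, (cnt C c + K*n)) * H := by
    have h := Finset.sum_mul_sq_le_sq_mul_sq F (fun c => Real.sqrt (cnt C c + K*n))
      (fun c => 1/Real.sqrt (cnt C c + K*n))
    have e1 : ∑ c ∈ F, Real.sqrt (cnt C c + K*n) * (1/Real.sqrt (cnt C c + K*n)) = m := by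
      rw [show ∑ c ∈ F, Real.sqrt (cnt C c + K*n) * (1/Real.sqrt (cnt C c + K*n))
          = ∑ c ∈ F, 1 from Finset.sum_congr rfl fun c hc => by
        have := hdpos c hc
        have hs : Real.sqrt (cnt C c + K*n) ≠ 0 := by positivity
        field_simp]
      simp [hmdef]
    have e2 : ∑ c ∈ F, (Real.sqrt (cnt C c + K*n))^2 = ∑ c ∈ F, (cnt C c + K*n) :=
      Finset.sum_congr rfl fun c hc => Real.sq_sqrt (hdpos c hc).le
    have e3 : ∑ c ∈ F, (1/Real.sqrt (cnt C c + K*n))^2 = H := by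
      rw [hHdef]
      refine Finset.sum_congr rfl fun c hc => ?_
      rw [div_pow, one_pow, Real.sq_sqrt (hdpos c hc).le]
    rw [e1, e2, e3] at h
    exact h
  have hFc : ∑ c ∈ F, cnt C c ≤ (n:ℝ) := by
    have h1 : ∑ c ∈ F, cnt C c ≤ ∑ c, cnt C c :=
      Finset.sum_le_sum_of_subset_of_nonneg (Finset.subset_univ F)
        (fun c _ _ => cnt_nonneg C c)
    rw [sum_cnt] at h1; exact h1
  have hsum_d : ∑ c ∈ F, (cnt C c + K*n) ≤ (n:ℝ) + m*(K*n) := by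
    rw [Finset.sum_add_distrib, Finset.sum_const, nsmul_eq_mul]
    rw [← hmdef]
    linarith
  have CS1' : m^2 ≤ ((n:ℝ) + m*(K*n)) * H :=
    le_trans CS1 (mul_le_mul_of_nonneg_right hsum_d hH0)
  have hmK : m * (1-K) ≤ 1 := by
    have h1K : 1 - K = 1/(r:ℝ) := by rw [hKdef]; ring
    rw [h1K]
    rw [mul_one_div, div_le_one hr0]
    exact hm_le
  have claim1 : ∑ c ∈ F, cnt C c / (cnt C c + K*n) ≤ 1 := by
    have hrw : ∑ c ∈ F, cnt C c / (cnt C c + K*n)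
        = ∑ c ∈ F, (1 - (K*n) * (1/(cnt C c + K*n))) := by
      refine Finset.sum_congr rfl fun c hc => ?_
      have := hdpos c hc
      field_simp
      ring
    rw [hrw, Finset.sum_sub_distrib, Finset.sum_const, ← Finset.mul_sum, ← hHdef,
      nsmul_eq_mul, mul_one, ← hmdef]
    -- goal : m - K*n*H ≤ 1
    rcases le_or_gt m 1 with hm1 | hm1
    · nlinarith [mul_nonneg hKn.le hH0]
    · have hpos2 : 0 < (n:ℝ) + m*(K*n) := by nlinarith
      have step1 : (m - 1) * ((n:ℝ) + m*(K*n)) ≤ K*n*m^2 := by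
        nlinarith [mul_nonneg hn0.le (sub_nonneg.mpr hmK)]
      have step2 : K*n*m^2 ≤ (K*n*H) * ((n:ℝ) + m*(K*n)) := by
        have := mul_le_mul_of_nonneg_left CS1' hKn.le
        nlinarith
      have := le_of_mul_le_mul_right (step1.trans step2) hpos2
      linarith
  -- Cauchy-Schwarz no. 2
  have CS2 : (∑ c ∈ F, cs C x c)^2
      ≤ (∑ c ∈ F, cnt C c / (cnt C c + K*n)) * (∑ c ∈ F, (cs C x c)^2 * ((cnt C c + K*n)/cnt C c)) := by
    have h := Finset.sum_mul_sq_le_sq_mul_sq F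
      (fun c => Real.sqrt (cnt C c / (cnt C c + K*n)))
      (fun c => cs C x c * Real.sqrt ((cnt C c + K*n)/cnt C c))
    have e1 : ∑ c ∈ F, Real.sqrt (cnt C c / (cnt C c + K*n))
        * (cs C x c * Real.sqrt ((cnt C c + K*n)/cnt C c)) = ∑ c ∈ F, cs C x c := by
      refine Finset.sum_congr rfl fun c hc => ?_
      have h1 := hcpos c hc
      have h2 := hdpos c hc
      have ha : (0:ℝ) ≤ cnt C c / (cnt C c + K*n) := by positivity
      have hab : Real.sqrt (cnt C c / (cnt C c + K*n)) * Real.sqrt ((cnt C c + K*n)/cnt C c) = 1 := by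
        rw [← Real.sqrt_mul ha]
        rw [show cnt C c / (cnt C c + K*n) * ((cnt C c + K*n)/cnt C c) = 1 from by field_simp]
        exact Real.sqrt_one
      calc Real.sqrt (cnt C c / (cnt C c + K*n)) * (cs C x c * Real.sqrt ((cnt C c + K*n)/cnt C c))
          = cs C x c * (Real.sqrt (cnt C c / (cnt C c + K*n)) * Real.sqrt ((cnt C c + K*n)/cnt C c)) := by ring
        _ = cs C x c := by rw [hab, mul_one]
    have e2 : ∑ c ∈ F, (Real.sqrt (cnt C c / (cnt C c + K*n)))^2
        = ∑ c ∈ F, cnt C c / (cnt C c + K*n) := by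
      refine Finset.sum_congr rfl fun c hc => ?_
      have h2 := hdpos c hc
      have h1 := hcpos c hc
      exact Real.sq_sqrt (by positivity)
    have e3 : ∑ c ∈ F, (cs C x c * Real.sqrt ((cnt C c + K*n)/cnt C c))^2
        = ∑ c ∈ F, (cs C x c)^2 * ((cnt C c + K*n)/cnt C c) := by
      refine Finset.sum_congr rfl fun c hc => ?_
      have h2 := hdpos c hc
      have h1 := hcpos c hc
      rw [mul_pow, Real.sq_sqrt (by positivity)]
    rw [e1, e2, e3] at h
    exact h
  have termbound : ∀ c ∈ F, (cs C x c)^2 * ((cnt C c + K*n)/cnt C c)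
      ≤ (cs C x c)^2 + (K*n) * t c := by
    intro c hc
    have h1 := hcpos c hc
    have heq : (cs C x c)^2 * ((cnt C c + K*n)/cnt C c)
        = (cs C x c)^2 + (K*n) * ((cs C x c)^2/cnt C c) := by
      field_simp
    have h2 : (cs C x c)^2/cnt C c ≤ t c := by
      rw [div_le_iff₀ h1]
      have := hst c
      linarith [this]
    rw [heq]
    have := mul_le_mul_of_nonneg_left h2 hKn.le
    linarith
  have second_nonneg : ∀ c ∈ F, (0:ℝ) ≤ (cs C x c)^2 * ((cnt C c + K*n)/cnt C c) := by
    intro c hc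
    have h1 := hcpos c hc
    have h2 := hdpos c hc
    positivity
  have hFs : ∑ c ∈ F, cs C x c = ∑ c, cs C x c := by
    refine Finset.sum_subset (Finset.subset_univ F) fun c _ hc => ?_
    have : cnt C c = 0 := by
      by_contra h
      exact hc (Finset.mem_filter.2 ⟨Finset.mem_univ c, h⟩)
    have hcard : (Finset.univ.filter fun i => C i = c).card = 0 := by
      have h' : ((Finset.univ.filter fun i => C i = c).card : ℝ) = 0 := this
      exact_mod_cast h'
    rw [cs, Finset.card_eq_zero.1 hcard, Finset.sum_empty]
  have hX0 : 0 ≤ ∑ c ∈ F, (cs C x c)^2 * ((cnt C c + K*n)/cnt C c) :=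
    Finset.sum_nonneg second_nonneg
  have main : (∑ c ∈ F, cs C x c)^2 ≤ ∑ c, ((cs C x c)^2 + (K*n) * t c) := by
    calc (∑ c ∈ F, cs C x c)^2
        ≤ (∑ c ∈ F, cnt C c / (cnt C c + K*n)) * (∑ c ∈ F, (cs C x c)^2 * ((cnt C c + K*n)/cnt C c)) := CS2
      _ ≤ ∑ c ∈ F, (cs C x c)^2 * ((cnt C c + K*n)/cnt C c) :=
          mul_le_of_le_one_left hX0 claim1
      _ ≤ ∑ c ∈ F, ((cs C x c)^2 + (K*n) * t c) := Finset.sum_le_sum termbound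
      _ ≤ ∑ c, ((cs C x c)^2 + (K*n) * t c) :=
          Finset.sum_le_sum_of_subset_of_nonneg (Finset.subset_univ F)
            (fun c _ _ => by have := ht0 c; positivity)
  rw [hFs, sum_cs] at main
  rw [Finset.sum_add_distrib, ← Finset.mul_sum, hsumt] at main
  linarith

lemma pmB_isHermitian : (pmB C).IsHermitian := by
  have h : (pmB C)ᴴ = pmB C := by
    ext i j
    simp only [conjTranspose_apply, pmB, Matrix.of_apply, star_trivial]
    by_cases h : C i = C j
    · rw [if_pos h, if_pos h.symm]
    · rw [if_neg h, if_neg (fun hh => h hh.symm)]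
  exact h

lemma trace_pmB : trace (pmB C) = 0 := by
  simp [trace, pmB, Matrix.diag]

lemma qf_eq (x : Fin n → ℝ) :
    x ⬝ᵥ (pmB C *ᵥ x) = (∑ i, x i)^2 - ∑ c, (cs C x c)^2 := by
  classical
  have inner_eq : ∀ i, (pmB C *ᵥ x) i = (∑ j, x j) - cs C x (C i) := by
    intro i
    simp only [mulVec, dotProduct, pmB, Matrix.of_apply]
    calc ∑ j, (if C i = C j then (0:ℝ) else 1) * x j
        = ∑ j, (x j - if C j = C i then x j else 0) := by
          refine Finset.sum_congr rfl fun j _ => ?_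
          by_cases h : C i = C j
          · rw [if_pos h, if_pos h.symm]; ring
          · rw [if_neg h, if_neg (fun hh => h hh.symm)]; ring
      _ = (∑ j, x j) - ∑ j, (if C j = C i then x j else 0) := Finset.sum_sub_distrib _ _
      _ = (∑ j, x j) - cs C x (C i) := by unfold cs; rw [Finset.sum_filter]
  have hdot : x ⬝ᵥ (pmB C *ᵥ x) = ∑ i, x i * ((∑ j, x j) - cs C x (C i)) := by
    rw [dotProduct]
    exact Finset.sum_congr rfl fun i _ => by rw [inner_eq i]
  rw [hdot]
  have hsplit : ∑ i, x i * ((∑ j, x j) - cs C x (C i))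
      = (∑ i, x i) * (∑ j, x j) - ∑ i, x i * cs C x (C i) := by
    simp only [mul_sub]
    rw [Finset.sum_sub_distrib, ← Finset.sum_mul]
  rw [hsplit]
  have hfib : ∑ i, x i * cs C x (C i) = ∑ c, (cs C x c)^2 := by
    rw [← Finset.sum_fiberwise Finset.univ C (fun i => x i * cs C x (C i))]
    refine Finset.sum_congr rfl fun c _ => ?_
    calc ∑ i ∈ Finset.univ.filter (fun i => C i = c), x i * cs C x (C i)
        = ∑ i ∈ Finset.univ.filter (fun i => C i = c), x i * cs C x c :=
          Finset.sum_congr rfl fun i hi => by rw [(Finset.mem_filter.1 hi).2]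
      _ = (∑ i ∈ Finset.univ.filter (fun i => C i = c), x i) * cs C x c := by
          rw [Finset.sum_mul]
      _ = (cs C x c)^2 := by rw [sq]; rfl
  rw [hfib, sq]

lemma qf_le (hr : 2 ≤ r) (hn : r ≤ n) (x : Fin n → ℝ) :
    x ⬝ᵥ (pmB C *ᵥ x) ≤ (1 - 1/(r:ℝ)) * n * (x ⬝ᵥ x) := by
  rw [qf_eq]
  have h := key_qf C hr hn x
  have hxx : x ⬝ᵥ x = ∑ i, (x i)^2 := by
    rw [dotProduct]; exact Finset.sum_congr rfl fun i _ => (sq (x i)).symm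
  rw [hxx]
  linarith

lemma qf_nonpos (x : Fin n → ℝ) (h : ∑ i, x i = 0) :
    x ⬝ᵥ (pmB C *ᵥ x) ≤ 0 := by
  rw [qf_eq, h]
  have : 0 ≤ ∑ c, (cs C x c)^2 := Finset.sum_nonneg fun c _ => sq_nonneg _
  simpa using this

lemma dotProduct_eq_inner (x y : EuclideanSpace ℝ (Fin n)) :
    (inner ℝ x y : ℝ) = (⇑x : Fin n → ℝ) ⬝ᵥ ⇑y := by
  simp [PiLp.inner_apply, RCLike.inner_apply, conj_trivial, dotProduct, mul_comm]

lemma sum_abs_eigen_pmB (hr : 2 ≤ r) (hn : r ≤ n) :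
    ∑ j, |(pmB_isHermitian C).eigenvalues j| ≤ 2 * ((1 - 1/(r:ℝ)) * n) := by
  classical
  have hr0 : (0:ℝ) < r := by exact_mod_cast Nat.lt_of_lt_of_le (by norm_num) hr
  have hn0 : (0:ℝ) < n := by exact_mod_cast Nat.lt_of_lt_of_le (by norm_num) (hr.trans hn)
  set hB := pmB_isHermitian C with hBdef
  set ν : Fin n → ℝ := hB.eigenvalues with hνdef
  set w : Fin n → (Fin n → ℝ) := fun j => ⇑(hB.eigenvectorBasis j) with hwdef
  set K : ℝ := 1 - 1/(r:ℝ) with hKdef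
  have hr2 : (2:ℝ) ≤ r := by exact_mod_cast hr
  have hK : 0 < K := by
    have h1 : (1:ℝ)/r ≤ 1/2 := by
      rw [div_le_div_iff₀ hr0 (by norm_num)]; linarith
    simp only [hKdef]; linarith
  have hKn : 0 < K * n := mul_pos hK hn0
  -- eigenvalue as quadratic form
  have hνeq : ∀ j, ν j = w j ⬝ᵥ (pmB C *ᵥ w j) := by
    intro j
    have he := hB.eigenvalues_eq j
    simpa [star_trivial] using he
  -- unit norm
  have hw1 : ∀ j, w j ⬝ᵥ w j = 1 := by
    intro j
    have h1 := hB.eigenvectorBasis.orthonormal.1 j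
    have h2 : (inner ℝ (hB.eigenvectorBasis j) (hB.eigenvectorBasis j) : ℝ)
        = ‖hB.eigenvectorBasis j‖ ^ 2 := real_inner_self_eq_norm_sq _
    rw [dotProduct_eq_inner] at h2
    have h3 : (⇑(hB.eigenvectorBasis j) : Fin n → ℝ) ⬝ᵥ ⇑(hB.eigenvectorBasis j) = 1 := by
      rw [h2, h1]; norm_num
    exact h3
  -- orthogonality
  have hworth : ∀ j k, j ≠ k → w j ⬝ᵥ w k = 0 := by
    intro j k hjk
    have h : (inner ℝ (hB.eigenvectorBasis j) (hB.eigenvectorBasis k) : ℝ) = 0 :=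
      hB.eigenvectorBasis.orthonormal.2 hjk
    rw [dotProduct_eq_inner] at h
    exact h
  have hmv : ∀ j, pmB C *ᵥ w j = ν j • w j := fun j => hB.mulVec_eigenvectorBasis j
  -- each eigenvalue at most K*n
  have hb : ∀ j, ν j ≤ K*n := by
    intro j
    have h := qf_le C hr hn (w j)
    rw [← hνeq j, hw1 j, mul_one] at h
    exact h
  -- positive eigenvalue has nonzero coordinate sum
  have hd : ∀ j, 0 < ν j → (∑ i, w j i) ≠ 0 := by
    intro j hj hsum
    have h := qf_nonpos C (w j) hsum
    rw [← hνeq j] at h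
    linarith
  -- at most one positive eigenvalue
  have hc : ∀ j k, j ≠ k → 0 < ν j → 0 < ν k → False := by
    intro j k hjk hj hk
    set a : ℝ := ∑ i, w k i with hadef
    set b : ℝ := ∑ i, w j i with hbdef
    have ha0 : a ≠ 0 := hd k hk
    have hb0 : b ≠ 0 := hd j hj
    set x : Fin n → ℝ := a • w j - b • w k with hxdef
    have hx0 : ∑ i, x i = 0 := by
      simp only [hxdef, Pi.sub_apply, Pi.smul_apply, smul_eq_mul]
      rw [Finset.sum_sub_distrib, ← Finset.mul_sum, ← Finset.mul_sum, ← hadef, ← hbdef]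
      ring
    have hqf := qf_nonpos C x hx0
    have hval : x ⬝ᵥ (pmB C *ᵥ x) = a*a*(ν j) + b*b*(ν k) := by
      rw [hxdef, Matrix.mulVec_sub, Matrix.mulVec_smul, Matrix.mulVec_smul, hmv, hmv]
      simp only [sub_dotProduct, dotProduct_sub, smul_dotProduct,
        dotProduct_smul, smul_eq_mul, hw1, hworth j k hjk, hworth k j (Ne.symm hjk)]
      ring
    rw [hval] at hqf
    nlinarith [mul_pos (mul_self_pos.mpr ha0) hj, mul_pos (mul_self_pos.mpr hb0) hk]
  -- trace zero
  have htr : ∑ j, ν j = 0 := by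
    have hspec := hB.spectral_theorem
    have h0 := trace_pmB C
    rw [hspec] at h0
    rw [RCLike.ofReal_real_eq_id, Function.id_comp] at h0
    have hW1' : star (hB.eigenvectorUnitary : Matrix (Fin n) (Fin n) ℝ)
        * (hB.eigenvectorUnitary : Matrix (Fin n) (Fin n) ℝ) = 1 :=
      Matrix.mem_unitaryGroup_iff'.mp hB.eigenvectorUnitary.2
    rw [Unitary.conjStarAlgAut_apply, Matrix.trace_mul_comm, ← Matrix.mul_assoc, hW1', Matrix.one_mul,
      Matrix.trace_diagonal] at h0
    exact h0
  -- conclusion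
  have habs : ∀ j, |ν j| = 2 * max (ν j) 0 - ν j := by
    intro j
    rcases le_or_gt 0 (ν j) with h | h
    · rw [abs_of_nonneg h, max_eq_left h]; ring
    · rw [abs_of_neg h, max_eq_right h.le]; ring
  have hmax : ∑ j, max (ν j) 0 ≤ K*n := by
    by_cases hall : ∀ j, ν j ≤ 0
    · have : ∀ j ∈ Finset.univ, max (ν j) (0:ℝ) = 0 := fun j _ => max_eq_right (hall j)
      rw [Finset.sum_congr rfl this, Finset.sum_const_zero]
      exact hKn.le
    · push_neg at hall
      obtain ⟨j₀, hj₀⟩ := hall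
      have hsingle : ∑ j, max (ν j) (0:ℝ) = max (ν j₀) 0 := by
        refine Finset.sum_eq_single_of_mem j₀ (Finset.mem_univ _) fun k _ hk => ?_
        refine max_eq_right (le_of_not_gt fun hkpos => ?_)
        exact hc k j₀ hk hkpos hj₀
      rw [hsingle, max_eq_left hj₀.le]
      exact hb j₀
  calc ∑ j, |ν j| = 2 * (∑ j, max (ν j) 0) - ∑ j, ν j := by
        rw [Finset.sum_congr rfl (fun j _ => habs j), Finset.sum_sub_distrib,
          ← Finset.mul_sum]
    _ ≤ 2 * (K*n) - 0 := by
        rw [htr]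
        have := hmax
        linarith
    _ = 2 * (K*n) := by ring

lemma trace_mul_eq (M N : Matrix (Fin n) (Fin n) ℝ) :
    Matrix.trace (M * N) = ∑ i, ∑ j, M i j * N j i := by
  simp [Matrix.trace, Matrix.diag, Matrix.mul_apply]

lemma cnt_eq_sum (c : Fin r) : cnt C c = ∑ j, (if C j = c then (1:ℝ) else 0) := by
  unfold cnt
  rw [Finset.card_filter]
  push_cast
  rfl

lemma sum_cnt_fib : ∑ i, cnt C (C i) = ∑ c, (cnt C c)^2 := by
  rw [← Finset.sum_fiberwise Finset.univ C (fun i => cnt C (C i))]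
  refine Finset.sum_congr rfl fun c _ => ?_
  calc ∑ i ∈ Finset.univ.filter (fun i => C i = c), cnt C (C i)
      = ∑ i ∈ Finset.univ.filter (fun i => C i = c), cnt C c :=
        Finset.sum_congr rfl fun i hi => by rw [(Finset.mem_filter.1 hi).2]
    _ = ((Finset.univ.filter (fun i => C i = c)).card : ℝ) * cnt C c := by
        rw [Finset.sum_const, nsmul_eq_mul]
    _ = (cnt C c)^2 := by rw [sq]; rfl

lemma count_diff : ∑ i : Fin n, ∑ j : Fin n, (if C i = C j then (0:ℝ) else 1)
    = (n:ℝ)^2 - ∑ c, (cnt C c)^2 := by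
  have hinner : ∀ i, ∑ j, (if C i = C j then (0:ℝ) else 1) = (n:ℝ) - cnt C (C i) := by
    intro i
    have h1 : ∑ j, (if C i = C j then (0:ℝ) else 1)
        = ∑ j, ((1:ℝ) - if C j = C i then 1 else 0) := by
      refine Finset.sum_congr rfl fun j _ => ?_
      by_cases h : C i = C j
      · rw [if_pos h, if_pos h.symm]; ring
      · rw [if_neg h, if_neg (fun hh => h hh.symm)]; ring
    rw [h1, Finset.sum_sub_distrib]
    congr 1
    · simp
    · exact (cnt_eq_sum C (C i)).symm
  calc ∑ i : Fin n, ∑ j : Fin n, (if C i = C j then (0:ℝ) else 1)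
      = ∑ i : Fin n, ((n:ℝ) - cnt C (C i)) := Finset.sum_congr rfl fun i _ => hinner i
    _ = (n:ℝ)^2 - ∑ c, (cnt C c)^2 := by
        rw [Finset.sum_sub_distrib, Finset.sum_const, nsmul_eq_mul, sum_cnt_fib]
        simp [sq]

lemma cnt_sq_lower : (n:ℝ)^2 ≤ (r:ℝ) * ∑ c, (cnt C c)^2 := by
  have h := sq_sum_le_card_mul_sum_sq (s := (Finset.univ : Finset (Fin r))) (f := cnt C)
  rw [sum_cnt] at h
  simpa using h

end ERPL

theorem energy_r_partite_le' {n r : ℕ} (hr : 2 ≤ r) (hn : r ≤ n)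
    (G : SimpleGraph (Fin n)) [DecidableRel G.Adj] (hG : G.Colorable r)
    (hA : (G.adjMatrix ℝ).IsHermitian) :
    ∑ i, |hA.eigenvalues i| ≤
      (n : ℝ) ^ (3 / 2 : ℝ) / 2 * Real.sqrt (1 - 1 / r) + (1 - 1 / r) * n := by
  classical
  obtain ⟨Co⟩ := hG
  set C : Fin n → Fin r := fun i => Co i with hCdef
  have hvalid : ∀ i j, G.Adj i j → C i ≠ C j := fun i j h => Co.valid h
  have hr0 : (0:ℝ) < r := by exact_mod_cast Nat.lt_of_lt_of_le (by norm_num) hr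
  have hn0 : (0:ℝ) < n := by exact_mod_cast Nat.lt_of_lt_of_le (by norm_num) (hr.trans hn)
  set K : ℝ := 1 - 1/(r:ℝ) with hKdef
  have hr2 : (2:ℝ) ≤ r := by exact_mod_cast hr
  have hK : 0 < K := by
    have h1 : (1:ℝ)/r ≤ 1/2 := by
      rw [div_le_div_iff₀ hr0 (by norm_num)]; linarith
    simp only [hKdef]; linarith
  have hKn : 0 < K * n := mul_pos hK hn0
  set A : Matrix (Fin n) (Fin n) ℝ := G.adjMatrix ℝ with hAdef
  set B : Matrix (Fin n) (Fin n) ℝ := ERPL.pmB C with hBdef2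
  have hB : B.IsHermitian := ERPL.pmB_isHermitian C
  set μ : Fin n → ℝ := hA.eigenvalues with hμdef
  set ν : Fin n → ℝ := hB.eigenvalues with hνdef
  set V : Matrix (Fin n) (Fin n) ℝ := (hA.eigenvectorUnitary : Matrix (Fin n) (Fin n) ℝ) with hVdef
  set W : Matrix (Fin n) (Fin n) ℝ := (hB.eigenvectorUnitary : Matrix (Fin n) (Fin n) ℝ) with hWdef
  have hV1 : V * star V = 1 := Matrix.mem_unitaryGroup_iff.mp hA.eigenvectorUnitary.2
  have hV1' : star V * V = 1 := Matrix.mem_unitaryGroup_iff'.mp hA.eigenvectorUnitary.2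
  have hW1 : W * star W = 1 := Matrix.mem_unitaryGroup_iff.mp hB.eigenvectorUnitary.2
  have hW1' : star W * W = 1 := Matrix.mem_unitaryGroup_iff'.mp hB.eigenvectorUnitary.2
  set ε : Fin n → ℝ := fun i => if 0 ≤ μ i then 1 else -1 with hεdef
  have hε1 : ∀ i, ε i * ε i = 1 := by
    intro i; by_cases h : 0 ≤ μ i <;> simp [hεdef, h]
  set S : Matrix (Fin n) (Fin n) ℝ := V * Matrix.diagonal ε * star V with hSdef
  have hAspec : A = V * Matrix.diagonal μ * star V := by
    have h := hA.spectral_theorem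
    rwa [Unitary.conjStarAlgAut_apply, RCLike.ofReal_real_eq_id, Function.id_comp] at h
  have hBspec : B = W * Matrix.diagonal ν * star W := by
    have h := hB.spectral_theorem
    rwa [Unitary.conjStarAlgAut_apply, RCLike.ofReal_real_eq_id, Function.id_comp] at h
  have hcancelV : ∀ X : Matrix (Fin n) (Fin n) ℝ, star V * (V * X) = X := by
    intro X; rw [← Matrix.mul_assoc, hV1', Matrix.one_mul]
  -- trace (S * A) = energy
  have hSA : Matrix.trace (S * A) = ∑ i, |μ i| := by
    rw [hAspec]
    have h1 : S * (V * Matrix.diagonal μ * star V)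
        = V * (Matrix.diagonal (fun i => ε i * μ i)) * star V := by
      rw [hSdef]
      simp only [Matrix.mul_assoc]
      rw [hcancelV (Matrix.diagonal μ * star V), ← Matrix.mul_assoc (Matrix.diagonal ε),
        Matrix.diagonal_mul_diagonal]
    rw [h1]
    have h2 : ∀ D : Matrix (Fin n) (Fin n) ℝ,
        Matrix.trace (V * D * star V) = Matrix.trace D := by
      intro D
      rw [Matrix.trace_mul_comm, ← Matrix.mul_assoc, hV1', Matrix.one_mul]
    rw [h2, Matrix.trace_diagonal]
    refine Finset.sum_congr rfl fun i _ => ?_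
    by_cases h : 0 ≤ μ i
    · simp only [hεdef]; rw [if_pos h, one_mul, abs_of_nonneg h]
    · simp only [hεdef]; rw [if_neg h, abs_of_neg (lt_of_not_ge h)]; ring
  set Cm : Matrix (Fin n) (Fin n) ℝ := A - (2⁻¹ : ℝ) • B with hCmdef
  have hA2 : A = Cm + (2⁻¹ : ℝ) • B := (sub_add_cancel A ((2⁻¹ : ℝ) • B)).symm
  have hsplit : Matrix.trace (S * A)
      = Matrix.trace (S * Cm) + 2⁻¹ * Matrix.trace (S * B) := by
    nth_rewrite 1 [hA2]
    rw [Matrix.mul_add, Matrix.trace_add, Matrix.mul_smul, Matrix.trace_smul, smul_eq_mul]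
  -- S entries and S * S = 1
  have hSapply : ∀ i j, S i j = ∑ k, V i k * ε k * V j k := by
    intro i j
    rw [hSdef, Matrix.mul_apply]
    refine Finset.sum_congr rfl fun k _ => ?_
    rw [Matrix.mul_diagonal, Matrix.star_apply, star_trivial]
  have hSsymm : ∀ i j, S j i = S i j := by
    intro i j
    rw [hSapply, hSapply]
    exact Finset.sum_congr rfl fun k _ => by ring
  have hSS : S * S = 1 := by
    rw [hSdef]
    simp only [Matrix.mul_assoc]
    rw [hcancelV (Matrix.diagonal ε * star V), ← Matrix.mul_assoc (Matrix.diagonal ε),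
      Matrix.diagonal_mul_diagonal]
    rw [show (fun i => ε i * ε i) = fun _ => (1:ℝ) from funext hε1, Matrix.diagonal_one,
      Matrix.one_mul, hV1]
  have hSfro : ∑ i, ∑ j, (S i j)^2 = (n:ℝ) := by
    have h1 : ∑ i, ∑ j, (S i j)^2 = Matrix.trace (S * S) := by
      rw [ERPL.trace_mul_eq]
      exact Finset.sum_congr rfl fun i _ => Finset.sum_congr rfl fun j _ => by
        rw [hSsymm i j, sq]
    rw [h1, hSS, Matrix.trace_one]
    simp
  -- Frobenius norm of Cm
  have hCm_entry : ∀ i j, (Cm i j)^2 = (1/4) * (if C i = C j then (0:ℝ) else 1) := by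
    intro i j
    rw [hCmdef, Matrix.sub_apply, Matrix.smul_apply, smul_eq_mul]
    by_cases h : C i = C j
    · rw [if_pos h]
      have hB0 : B i j = 0 := by rw [hBdef2]; exact if_pos h
      have hA0 : A i j = 0 := by
        rw [hAdef, SimpleGraph.adjMatrix_apply,
          if_neg (fun hadj => hvalid i j hadj h)]
      rw [hA0, hB0]; ring
    · rw [if_neg h]
      have hB1 : B i j = 1 := by rw [hBdef2]; exact if_neg h
      rw [hB1]
      by_cases hadj : G.Adj i j
      · rw [hAdef, SimpleGraph.adjMatrix_apply, if_pos hadj]; norm_num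
      · rw [hAdef, SimpleGraph.adjMatrix_apply, if_neg hadj]; norm_num
  have hCmfro : ∑ i, ∑ j, (Cm i j)^2 ≤ K * (n:ℝ)^2 / 4 := by
    have heq : ∑ i, ∑ j, (Cm i j)^2
        = (1/4) * ((n:ℝ)^2 - ∑ c, (ERPL.cnt C c)^2) := by
      rw [← ERPL.count_diff C, Finset.mul_sum]
      refine Finset.sum_congr rfl fun i _ => ?_
      rw [Finset.mul_sum]
      exact Finset.sum_congr rfl fun j _ => hCm_entry i j
    rw [heq]
    have hX : (n:ℝ)^2 ≤ (r:ℝ) * ∑ c, (ERPL.cnt C c)^2 := ERPL.cnt_sq_lower C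
    have hy : (0:ℝ) < 1/(r:ℝ) := by positivity
    have h2 := mul_le_mul_of_nonneg_left hX hy.le
    have h3 : (1/(r:ℝ)) * ((r:ℝ) * ∑ c, (ERPL.cnt C c)^2) = ∑ c, (ERPL.cnt C c)^2 := by
      field_simp
    rw [h3] at h2
    simp only [hKdef]
    nlinarith [h2]
  -- Frobenius Cauchy-Schwarz
  have hFCS : Matrix.trace (S * Cm) ≤ Real.sqrt (n:ℝ) * Real.sqrt (K * (n:ℝ)^2/4) := by
    have e0 : ∑ p : Fin n × Fin n, S p.1 p.2 * Cm p.2 p.1 = ∑ i, ∑ j, S i j * Cm j i := by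
      rw [Fintype.sum_prod_type]
    have h1 : Matrix.trace (S * Cm) = ∑ p : Fin n × Fin n, S p.1 p.2 * Cm p.2 p.1 := by
      rw [ERPL.trace_mul_eq]; exact e0.symm
    rw [h1]
    have h2 := Real.sum_mul_le_sqrt_mul_sqrt Finset.univ
      (fun p : Fin n × Fin n => S p.1 p.2) (fun p => Cm p.2 p.1)
    have h3 : ∑ p : Fin n × Fin n, (S p.1 p.2)^2 = (n:ℝ) := by
      rw [show ∑ p : Fin n × Fin n, (S p.1 p.2)^2 = ∑ i, ∑ j, (S i j)^2 from by
        rw [Fintype.sum_prod_type]]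
      exact hSfro
    have h4 : ∑ p : Fin n × Fin n, (Cm p.2 p.1)^2 ≤ K * (n:ℝ)^2/4 := by
      rw [show ∑ p : Fin n × Fin n, (Cm p.2 p.1)^2 = ∑ i, ∑ j, (Cm j i)^2 from by
        rw [Fintype.sum_prod_type]]
      rw [Finset.sum_comm]
      exact hCmfro
    calc ∑ p : Fin n × Fin n, S p.1 p.2 * Cm p.2 p.1
        ≤ Real.sqrt (∑ p : Fin n × Fin n, (S p.1 p.2)^2)
          * Real.sqrt (∑ p : Fin n × Fin n, (Cm p.2 p.1)^2) := h2
      _ ≤ Real.sqrt (n:ℝ) * Real.sqrt (K * (n:ℝ)^2/4) := by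
          rw [h3]
          exact mul_le_mul_of_nonneg_left (Real.sqrt_le_sqrt h4) (Real.sqrt_nonneg _)
  -- trace (S * B) bound
  set R : Matrix (Fin n) (Fin n) ℝ := star W * V with hRdef
  have hstarR : star R = star V * W := by
    rw [hRdef, Matrix.star_mul, star_star]
  have hRunit : R * star R = 1 := by
    rw [hRdef, hstarR]
    calc star W * V * (star V * W) = star W * (V * star V * W) := by
          simp only [Matrix.mul_assoc]
      _ = 1 := by rw [hV1, Matrix.one_mul, hW1']
  have hRow : ∀ j, ∑ i, (R j i)^2 = 1 := by
    intro j
    have h1 : (R * star R) j j = (1 : Matrix (Fin n) (Fin n) ℝ) j j := by rw [hRunit]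
    rw [Matrix.mul_apply, Matrix.one_apply_eq] at h1
    calc ∑ i, (R j i)^2 = ∑ i, R j i * star R i j := by
          refine Finset.sum_congr rfl fun i _ => ?_
          rw [Matrix.star_apply, star_trivial, sq]
      _ = 1 := h1
  have hQeq : star W * S * W = R * Matrix.diagonal ε * star R := by
    rw [hSdef, hRdef, hstarR]
    simp only [Matrix.mul_assoc]
  have hQdiag : ∀ j, (star W * S * W) j j = ∑ i, ε i * (R j i)^2 := by
    intro j
    rw [hQeq, Matrix.mul_apply]
    refine Finset.sum_congr rfl fun i _ => ?_
    rw [Matrix.mul_diagonal, Matrix.star_apply, star_trivial]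
    ring
  have hQabs : ∀ j, |(star W * S * W) j j| ≤ 1 := by
    intro j
    rw [hQdiag]
    calc |∑ i, ε i * (R j i)^2| ≤ ∑ i, |ε i * (R j i)^2| :=
          Finset.abs_sum_le_sum_abs _ _
      _ = ∑ i, (R j i)^2 := by
          refine Finset.sum_congr rfl fun i _ => ?_
          rw [abs_mul]
          have hεabs : |ε i| = 1 := by
            by_cases h : 0 ≤ μ i <;> simp [hεdef, h]
          rw [hεabs, one_mul, abs_of_nonneg (sq_nonneg _)]
      _ = 1 := hRow j
  have htrSB : Matrix.trace (S * B) = ∑ j, (star W * S * W) j j * ν j := by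
    rw [hBspec]
    have h1 : S * (W * Matrix.diagonal ν * star W)
        = S * W * Matrix.diagonal ν * star W := by simp only [Matrix.mul_assoc]
    rw [h1, Matrix.trace_mul_comm]
    have h2 : star W * (S * W * Matrix.diagonal ν)
        = (star W * S * W) * Matrix.diagonal ν := by simp only [Matrix.mul_assoc]
    rw [h2]
    simp [Matrix.trace, Matrix.diag, Matrix.mul_diagonal]
  have hSB : Matrix.trace (S * B) ≤ 2 * (K * n) := by
    rw [htrSB]
    calc ∑ j, (star W * S * W) j j * ν j ≤ ∑ j, |ν j| := by
          refine Finset.sum_le_sum fun j _ => ?_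
          calc (star W * S * W) j j * ν j ≤ |(star W * S * W) j j * ν j| := le_abs_self _
            _ = |(star W * S * W) j j| * |ν j| := abs_mul _ _
            _ ≤ 1 * |ν j| := mul_le_mul_of_nonneg_right (hQabs j) (abs_nonneg _)
            _ = |ν j| := one_mul _
      _ ≤ 2 * (K * n) := ERPL.sum_abs_eigen_pmB C hr hn
  -- arithmetic with square roots
  have hman : Real.sqrt (n:ℝ) * Real.sqrt (K * (n:ℝ)^2/4)
      = (n:ℝ) ^ (3/2 : ℝ)/2 * Real.sqrt K := by
    have h1 : Real.sqrt (K * (n:ℝ)^2/4) = Real.sqrt K * n / 2 := by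
      have heq : (Real.sqrt K * n / 2)^2 = K * (n:ℝ)^2/4 := by
        have hs := Real.sq_sqrt hK.le
        calc (Real.sqrt K * n / 2)^2 = (Real.sqrt K)^2 * (n:ℝ)^2/4 := by ring
          _ = K * (n:ℝ)^2/4 := by rw [hs]
      rw [← heq, Real.sqrt_sq (by positivity)]
    have h2 : (n:ℝ) ^ (3/2 : ℝ) = n * Real.sqrt n := by
      rw [show (3/2 : ℝ) = 1 + 1/2 by norm_num, Real.rpow_add hn0, Real.rpow_one,
        ← Real.sqrt_eq_rpow]
    rw [h1, h2]
    ring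
  calc ∑ i, |μ i| = Matrix.trace (S * A) := hSA.symm
    _ = Matrix.trace (S * Cm) + 2⁻¹ * Matrix.trace (S * B) := hsplit
    _ ≤ Real.sqrt (n:ℝ) * Real.sqrt (K * (n:ℝ)^2/4) + 2⁻¹ * (2 * (K * n)) := by
        have h5 : 2⁻¹ * Matrix.trace (S * B) ≤ 2⁻¹ * (2 * (K * n)) :=
          mul_le_mul_of_nonneg_left hSB (by norm_num)
        exact add_le_add hFCS h5
    _ = (n:ℝ) ^ (3/2 : ℝ)/2 * Real.sqrt K + K * n := by rw [hman]; ring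

/-- if `n ≥ r ≥ 2` and `G` is an `r`-partite graph on `n` vertices, then the sum
of the absolute values of its adjacency eigenvalues (its graph energy / trace norm) is at most
`(n^(3/2)/2) √(1 - 1/r) + (1 - 1/r) n`. -/
theorem energy_r_partite_le {n r : ℕ} (hr : 2 ≤ r) (hn : r ≤ n)
    (G : SimpleGraph (Fin n)) [DecidableRel G.Adj] (hG : G.Colorable r)
    (hA : (G.adjMatrix ℝ).IsHermitian) :
    ∑ i, |hA.eigenvalues i| ≤
      (n : ℝ) ^ (3 / 2 : ℝ) / 2 * Real.sqrt (1 - 1 / r) + (1 - 1 / r) * n :=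
  energy_r_partite_le' hr hn G hG hA
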